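/- Let w ∈ ℂ^M be nonzero and set N_RF ≥ 2. Define b = max_i |w_i| / N_RF and w_BB = (b, b, ..., b) ∈ ℂ^{N_RF}. Then for every index i, the lengths |w_i|, b, b, ..., b (N_RF copies of b) satisfy the polygon inequality: the largest among them is at most the sum of the others. Consequently there exist unimodular complex numbers u_{i,1},...,u_{i,N_RF} (|u_{i,j}| = 1) with w_i = b Σ_{j=1}^{N_RF} u_{i,j}. -/

import Mathlib

open Complex

lemma norm_coe (t : ℝ) (ht : 0 ≤ t) : ‖(t : ℂ)‖ = t := by
  rw [Complex.norm_real, Real.norm_eq_abs, _root_.abs_of_nonneg ht]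

lemma two_unimodular (z : ℂ) (h : ‖z‖ ≤ 2) :
    ∃ u v : ℂ, ‖u‖ = 1 ∧ ‖v‖ = 1 ∧ z = u + v := by
  set r := ‖z‖ with hr
  have hr0 : 0 ≤ r := norm_nonneg z
  set d : ℂ := if z = 0 then 1 else z / r with hd
  have hdn : ‖d‖ = 1 := by
    rw [hd]
    split_ifs with h0
    · simp
    · rw [norm_div, norm_coe r hr0, hr, div_self (norm_ne_zero_iff.mpr h0)]
  have hz : z = d * r := by
    rw [hd]
    split_ifs with h0
    · simp [h0, hr]
    · have : (r : ℂ) ≠ 0 := by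
        simp only [ne_eq, Complex.ofReal_eq_zero, hr]
        exact norm_ne_zero_iff.mpr h0
      field_simp
  set θ := Real.arccos (r / 2) with hθ
  have hcos : Real.cos θ = r / 2 := Real.cos_arccos (by linarith) (by linarith)
  refine ⟨d * Complex.exp (θ * Complex.I), d * Complex.exp (-θ * Complex.I), ?_, ?_, ?_⟩
  · rw [norm_mul, hdn, Complex.norm_exp_ofReal_mul_I, one_mul]
  · have : (-θ : ℂ) = ((-θ : ℝ) : ℂ) := by push_cast; ring
    rw [norm_mul, hdn, this, Complex.norm_exp_ofReal_mul_I, one_mul]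
  · have e1 : Complex.exp (θ * Complex.I) + Complex.exp (-θ * Complex.I)
        = 2 * Complex.cos θ := by
      exact (Complex.two_cos _).symm
    rw [← mul_add, e1, ← Complex.ofReal_cos, hcos, hz]
    push_cast
    ring

lemma sum_unimodular : ∀ (k : ℕ) (z : ℂ), ‖z‖ ≤ (k + 2 : ℕ) →
    ∃ u : Fin (k + 2) → ℂ, (∀ j, ‖u j‖ = 1) ∧ z = ∑ j, u j := by
  intro k
  induction k with
  | zero =>
    intro z hz
    obtain ⟨u, v, hu, hv, huv⟩ := two_unimodular z (by exact_mod_cast hz)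
    exact ⟨![u, v], by intro j; fin_cases j <;> simpa, by simpa [Fin.sum_univ_two]⟩
  | succ n ih =>
    intro z hz
    have key : ∃ u0 : ℂ, ‖u0‖ = 1 ∧ ‖z - u0‖ ≤ (n + 2 : ℕ) := by
      by_cases h1 : 1 ≤ ‖z‖
      · refine ⟨z / ‖z‖, ?_, ?_⟩
        · rw [norm_div, norm_coe _ (norm_nonneg z), div_self (by positivity : ‖z‖ ≠ 0)]
        · have hzne : (‖z‖ : ℂ) ≠ 0 := by
            simp only [ne_eq, Complex.ofReal_eq_zero]
            positivity
          have : z - z / ‖z‖ = z * ((‖z‖ - 1 : ℝ) / ‖z‖) := by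
            push_cast
            rw [mul_div_assoc', mul_sub, mul_one, sub_div,
              mul_div_cancel_right₀ _ hzne]
          rw [this, norm_mul, norm_div, norm_coe _ (by linarith : (0:ℝ) ≤ ‖z‖ - 1),
            norm_coe _ (norm_nonneg z), mul_comm,
            div_mul_cancel₀ _ (by positivity : ‖z‖ ≠ 0)]
          push_cast at hz ⊢
          linarith
      · refine ⟨1, by simp, ?_⟩
        push_neg at h1
        calc ‖z - 1‖ ≤ ‖z‖ + ‖(1:ℂ)‖ := norm_sub_le _ _
          _ ≤ 1 + 1 := by rw [norm_one]; linarith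
          _ ≤ (n + 2 : ℕ) := by push_cast; linarith
    obtain ⟨u0, hu0, hle⟩ := key
    obtain ⟨u, hu, hsum⟩ := ih (z - u0) hle
    refine ⟨Fin.cons u0 u, ?_, ?_⟩
    · intro j
      refine Fin.cases ?_ ?_ j <;> simp [hu0, hu]
    · rw [Fin.sum_cons, ← hsum]; ring

theorem hybrid_decomposition (M N : ℕ) (hN : 2 ≤ N) (w : Fin M → ℂ) (hw : w ≠ 0)
    (b : ℝ) (hb : b = (⨆ i, ‖w i‖) / N) :
    ∀ i : Fin M,
      (‖w i‖ ≤ N * b ∧ b ≤ (N - 1) * b + ‖w i‖) ∧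
      ∃ u : Fin N → ℂ, (∀ j, ‖u j‖ = 1) ∧ w i = (b : ℂ) * ∑ j, u j := by
  obtain ⟨i0, hi0⟩ : ∃ i, w i ≠ 0 := by
    by_contra h
    push_neg at h
    exact hw (funext h)
  have hM : Nonempty (Fin M) := ⟨i0⟩
  set s := ⨆ i, ‖w i‖ with hs
  have hbdd : BddAbove (Set.range fun i => ‖w i‖) :=
    Set.Finite.bddAbove (Set.finite_range _)
  have hle : ∀ i, ‖w i‖ ≤ s := fun i => le_ciSup hbdd i
  have hspos : 0 < s := lt_of_lt_of_le (norm_pos_iff.mpr hi0) (hle i0)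
  have hNpos : (0:ℝ) < N := by positivity
  have hN1 : (1:ℝ) ≤ (N:ℝ) - 1 := by
    have : (2:ℝ) ≤ N := by exact_mod_cast hN
    linarith
  have hbpos : 0 < b := by rw [hb]; positivity
  have hNb : (N:ℝ) * b = s := by rw [hb]; field_simp
  intro i
  refine ⟨⟨by rw [hNb]; exact hle i, ?_⟩, ?_⟩
  · nlinarith [norm_nonneg (w i)]
  · obtain ⟨k, rfl⟩ : ∃ k, N = k + 2 := ⟨N - 2, by omega⟩
    have hnorm : ‖w i / b‖ ≤ ((k + 2 : ℕ) : ℝ) := by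
      rw [norm_div, norm_coe _ hbpos.le, div_le_iff₀ hbpos]
      rw [hNb]
      exact hle i
    obtain ⟨u, hu, hsum⟩ := sum_unimodular k (w i / b) hnorm
    refine ⟨u, hu, ?_⟩
    have hbne : (b : ℂ) ≠ 0 := Complex.ofReal_ne_zero.mpr hbpos.ne'
    rw [← hsum, mul_comm, div_mul_cancel₀ _ hbne]
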